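/- For every ρ > 0 and every t ∈ ℝ, μ_ρ[ e^{ t (c(η) − α) } ] ≤ exp( α a₁ t² e^{a₁ |t|} ), where α = α(ρ), the expectation is with respect to the one-site grand canonical measure μ_ρ on ℕ, and a₁ is the constant of Condition (LG). -/

import Mathlib

open scoped BigOperators

noncomputable section

/-- `cfact c k = c(k)! = c(1)⋯c(k)`, with `cfact c 0 = 1`. -/
def cfact (c : ℕ → ℝ) : ℕ → ℝ
  | 0 => 1
  | k + 1 => cfact c k * c (k + 1)

/-- The configuration obtained from `η` by moving one particle from `x` to `y` (`x ≠ y`),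
i.e. `η - δ^x + δ^y`. -/
def move (η : ℤ → ℕ) (x y : ℤ) : ℤ → ℕ :=
  fun z => if z = x then η x - 1 else if z = y then η y + 1 else η z

/-- Unnormalized weight of the canonical measure `ν_Λ^N` on configurations supported in `Λ`
with `N` particles: `∏_{x∈Λ} 1/c(η_x)!`. -/
def nuW (c : ℕ → ℝ) (Λ : Finset ℤ) (N : ℕ) : (ℤ → ℕ) → ℝ :=
  Set.indicator {η : ℤ → ℕ | (∀ x, x ∉ Λ → η x = 0) ∧ (∑ x ∈ Λ, η x) = N}
    (fun η => ∏ x ∈ Λ, (cfact c (η x))⁻¹)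

/-- Expectation with respect to the probability measure obtained by normalizing the
nonnegative weight `w`. -/
def wE (w f : (ℤ → ℕ) → ℝ) : ℝ :=
  (∑' η : ℤ → ℕ, w η * f η) / (∑' η : ℤ → ℕ, w η)

/-- Covariance `μ[f,g] = μ[f g] - μ[f] μ[g]`. -/
def wCov (w f g : (ℤ → ℕ) → ℝ) : ℝ :=
  wE w (fun η => f η * g η) - wE w f * wE w g

/-- Entropy `Ent_μ(f) = μ[f log f] - μ[f] log μ[f]` (note `Real.log 0 = 0`, giving the
convention `0 log 0 = 0`). -/
def wEnt (w f : (ℤ → ℕ) → ℝ) : ℝ :=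
  wE w (fun η => f η * Real.log (f η)) - wE w f * Real.log (wE w f)

/-- Dirichlet form of the zero-range process on `Λ`:
`E(f,g) = (1/2) Σ_{x∈Λ} Σ_{y∈Λ, |x-y|=1} μ[c(η_x) ∂_{xy}f ∂_{xy}g]`. -/
def wDir (c : ℕ → ℝ) (Λ : Finset ℤ) (w f g : (ℤ → ℕ) → ℝ) : ℝ :=
  wE w (fun η => (1 / 2) * ∑ x ∈ Λ, ∑ y ∈ Λ,
    if |x - y| = 1 then c (η x) * ((f (move η x y) - f η) * (g (move η x y) - g η)) else 0)

/-- Weight conditioned on the event `∑_{x ∈ Λ₁} η x = n`. -/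
def condW (w : (ℤ → ℕ) → ℝ) (Λ₁ : Finset ℤ) (n : ℕ) : (ℤ → ℕ) → ℝ :=
  Set.indicator {η : ℤ → ℕ | (∑ x ∈ Λ₁, η x) = n} w

/-- `h(n) = (n+1)/c(n+1)`. -/
def hfun (c : ℕ → ℝ) (n : ℕ) : ℝ := (n + 1) / c (n + 1)

/-- Grand canonical partition function `Z(α) = Σ_k α^k / c(k)!`. -/
def Zfun (c : ℕ → ℝ) (α : ℝ) : ℝ := ∑' k : ℕ, α ^ k / cfact c k

/-- Mean particle number per site under the grand canonical measure with fugacity `α`. -/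
def meanGC (c : ℕ → ℝ) (α : ℝ) : ℝ :=
  (∑' k : ℕ, (k : ℝ) * α ^ k / cfact c k) / Zfun c α



lemma cfact_pos {c : ℕ → ℝ} (hcpos : ∀ n : ℕ, 0 < n → 0 < c n) : ∀ k, 0 < cfact c k
  | 0 => one_pos
  | k + 1 => mul_pos (cfact_pos hcpos k) (hcpos _ k.succ_pos)

lemma c_le {c : ℕ → ℝ} {a₁ : ℝ} (hc0 : c 0 = 0) (hLG : ∀ k : ℕ, |c (k + 1) - c k| ≤ a₁) :
    ∀ k : ℕ, c k ≤ a₁ * k := by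
  intro k
  induction k with
  | zero => simp [hc0]
  | succ n ih =>
      have h := (abs_le.1 (hLG n)).2
      push_cast
      nlinarith
lemma c_grow {c : ℕ → ℝ} {a₂ : ℝ} {k₀ : ℕ} (hc0 : c 0 = 0)
    (hcpos : ∀ n : ℕ, 0 < n → 0 < c n)
    (hM : ∀ j k : ℕ, j + k₀ ≤ k → a₂ ≤ c k - c j) :
    ∀ m k : ℕ, m * k₀ ≤ k → (m : ℝ) * a₂ ≤ c k := by
  intro m
  induction m with
  | zero =>
      intro k _
      rcases Nat.eq_zero_or_pos k with h | h
      · simp [h, hc0]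
      · simpa using (hcpos k h).le
  | succ n ih =>
      intro k hk
      have hk0 : k₀ ≤ k := by rw [Nat.succ_mul] at hk; omega
      have hk' : n * k₀ + k₀ ≤ k := by rw [Nat.succ_mul] at hk; exact hk
      have h1 : n * k₀ ≤ k - k₀ := by omega
      have h2 := ih _ h1
      have h3 := hM (k - k₀) k (by omega)
      push_cast
      nlinarith

lemma abs_exp_sub_one_le (x : ℝ) : |Real.exp x - 1| ≤ |x| * Real.exp |x| := by
  rcases le_or_gt 0 x with h | h
  · have h1 : -x + 1 ≤ Real.exp (-x) := Real.add_one_le_exp (-x)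
    have h2 : Real.exp (-x) * Real.exp x = 1 := by
      rw [← Real.exp_add]; simp
    have h3 : Real.exp x - 1 ≤ x * Real.exp x := by nlinarith [Real.exp_pos x]
    rw [abs_of_nonneg h, abs_of_nonneg (by nlinarith [Real.add_one_le_exp x] : (0:ℝ) ≤ Real.exp x - 1)]
    exact h3
  · have h1 : x + 1 ≤ Real.exp x := Real.add_one_le_exp x
    have h2 : Real.exp x ≤ 1 := by
      rw [show (1:ℝ) = Real.exp 0 by simp]; exact Real.exp_le_exp.2 h.le
    rw [abs_of_neg h, abs_of_nonpos (by linarith : Real.exp x - 1 ≤ 0)]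
    have h4 : (1:ℝ) ≤ Real.exp (-x) := by
      rw [show (1:ℝ) = Real.exp 0 by simp]; exact Real.exp_le_exp.2 (by linarith)
    nlinarith

lemma master_summable {c : ℕ → ℝ} {α a₂ : ℝ} {k₀ : ℕ} (hc0 : c 0 = 0)
    (hcpos : ∀ n : ℕ, 0 < n → 0 < c n) (hk₀ : 0 < k₀) (ha₂ : 0 < a₂)
    (hM : ∀ j k : ℕ, j + k₀ ≤ k → a₂ ≤ c k - c j) (hα : 0 < α) (b : ℝ) :
    Summable (fun k : ℕ => α ^ k * Real.exp (b * k) / cfact c k) := by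
  have hcf := cfact_pos hcpos
  apply summable_of_ratio_norm_eventually_le (r := 1/2) (by norm_num)
  rw [Filter.eventually_atTop]
  set m : ℕ := ⌈(2 * α * Real.exp b) / a₂⌉₊ with hm
  refine ⟨m * k₀, fun k hk => ?_⟩
  have hck : (2 * α * Real.exp b) ≤ c (k + 1) := by
    have h1 : (2 * α * Real.exp b) / a₂ ≤ (m : ℝ) := Nat.le_ceil _
    have h2 : (m : ℝ) * a₂ ≤ c (k + 1) :=
      c_grow hc0 hcpos hM m (k + 1) (le_trans hk (Nat.le_succ k))
    calc (2 * α * Real.exp b) = (2 * α * Real.exp b) / a₂ * a₂ := by field_simp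
      _ ≤ (m : ℝ) * a₂ := by  exact mul_le_mul_of_nonneg_right h1 ha₂.le
      _ ≤ c (k + 1) := h2
  have hpos : (0:ℝ) < α ^ k * Real.exp (b * k) / cfact c k :=
    div_pos (by positivity) (hcf k)
  have hc1 : 0 < c (k + 1) := hcpos _ k.succ_pos
  rw [Real.norm_eq_abs, Real.norm_eq_abs, abs_of_pos (div_pos (by positivity) (hcf (k+1))), abs_of_pos hpos]
  have key : α ^ (k+1) * Real.exp (b * (k+1)) / cfact c (k+1)
      = (α ^ k * Real.exp (b * k) / cfact c k) * (α * Real.exp b / c (k + 1)) := by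
    rw [show cfact c (k+1) = cfact c k * c (k+1) from rfl]
    rw [pow_succ, show b * ((k:ℝ)+1) = b * k + b by ring, Real.exp_add]
    field_simp
  push_cast
  rw [key]
  have hfac : α * Real.exp b / c (k + 1) ≤ 1 / 2 := by
    rw [div_le_div_iff₀ hc1 (by norm_num)]
    nlinarith [Real.exp_pos b]
  calc (α ^ k * Real.exp (b * k) / cfact c k) * (α * Real.exp b / c (k + 1))
      ≤ (α ^ k * Real.exp (b * k) / cfact c k) * (1/2) := by
        exact mul_le_mul_of_nonneg_left hfac hpos.le
    _ = 1 / 2 * (α ^ k * Real.exp (b * k) / cfact c k) := by ring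

set_option maxHeartbeats 1000000 in
/-- Lemma 4.1: for every `ρ > 0` (with `α = α(ρ)` the corresponding fugacity, i.e. the
unique `α > 0` with mean `ρ`), `μ_ρ[e^{t(c-α)}] ≤ exp(α a₁ t² e^{a₁|t|})`. -/
theorem statement16
    (c : ℕ → ℝ) (a₁ a₂ : ℝ) (k₀ : ℕ)
    (hc0 : c 0 = 0) (hcpos : ∀ n : ℕ, 0 < n → 0 < c n)
    (hLG : ∀ k : ℕ, |c (k + 1) - c k| ≤ a₁)
    (hk₀ : 0 < k₀) (ha₂ : 0 < a₂)
    (hM : ∀ j k : ℕ, j + k₀ ≤ k → a₂ ≤ c k - c j) :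
    ∀ ρ : ℝ, 0 < ρ → ∀ α : ℝ, 0 < α → meanGC c α = ρ → ∀ t : ℝ,
      (∑' k : ℕ, (α ^ k / cfact c k) * Real.exp (t * (c k - α))) / Zfun c α
        ≤ Real.exp (α * a₁ * t ^ 2 * Real.exp (a₁ * |t|)) := by
  intro ρ hρ α hα hmean t
  have hcf := cfact_pos hcpos
  have ha₁ : 0 < a₁ := by
    have h := hLG 0
    rw [hc0, sub_zero] at h
    exact lt_of_lt_of_le (hcpos 1 one_pos) ((le_abs_self _).trans h)
  have hcle := c_le hc0 hLG
  have hcnn : ∀ k : ℕ, 0 ≤ c k := by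
    intro k
    rcases Nat.eq_zero_or_pos k with h | h
    · simp [h, hc0]
    · exact (hcpos k h).le
  set T : ℝ := |t| with hTdef
  have hT0 : 0 ≤ T := abs_nonneg t
  set R : ℝ := T + 1 with hRdef
  have hR0 : 0 < R := by positivity
  have hTR : T ≤ R := by rw [hRdef]; linarith
  set g : ℕ → ℝ → ℝ := fun k s => α ^ k / cfact c k * Real.exp (s * (c k - α)) with hgdef
  have hgnn : ∀ k s, 0 ≤ g k s := fun k s =>
    mul_nonneg (div_nonneg (by positivity) (hcf k).le) (Real.exp_pos _).le
  have hmaster := fun b => master_summable hc0 hcpos hk₀ ha₂ hM hα b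
  -- exponential bound
  have hexp : ∀ s : ℝ, |s| ≤ R → ∀ k : ℕ, Real.exp (s * (c k - α)) ≤
      Real.exp (R * (a₁ * k + α)) := by
    intro s hs k
    apply Real.exp_le_exp.2
    calc s * (c k - α) ≤ |s * (c k - α)| := le_abs_self _
      _ = |s| * |c k - α| := abs_mul _ _
      _ ≤ R * (a₁ * k + α) := by
          apply mul_le_mul hs _ (abs_nonneg _) hR0.le
          calc |c k - α| ≤ |c k| + |α| := abs_sub _ _
            _ = c k + α := by rw [abs_of_nonneg (hcnn k), abs_of_pos hα]
            _ ≤ a₁ * k + α := by linarith [hcle k]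
  -- summability of g
  have hSexp : Summable (fun k : ℕ => α ^ k / cfact c k * Real.exp (R * (a₁ * k + α))) := by
    refine ((hmaster (R * a₁)).mul_left (Real.exp (R * α))).congr fun k => ?_
    rw [show R * (a₁ * (k:ℝ) + α) = R * a₁ * k + R * α by ring, Real.exp_add]
    ring
  have hsum_g : ∀ s : ℝ, |s| ≤ R → Summable (fun k => g k s) := by
    intro s hs
    refine Summable.of_nonneg_of_le (fun k => hgnn k s) (fun k => ?_) hSexp
    exact mul_le_mul_of_nonneg_left (hexp s hs k) (div_nonneg (by positivity) (hcf k).le)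
  -- the dominating sequence u
  set u : ℕ → ℝ := fun k => (a₁ * k + α) * (α ^ k / cfact c k) * Real.exp (R * (a₁ * k + α))
    with hudef
  have hunn : ∀ k, 0 ≤ u k := fun k =>
    mul_nonneg (mul_nonneg (by positivity) (div_nonneg (by positivity) (hcf k).le))
      (Real.exp_pos _).le
  have hu : Summable u := by
    refine Summable.of_nonneg_of_le hunn (fun k => ?_)
      (((hmaster (R * a₁ + 1)).mul_left ((a₁ + α) * Real.exp (R * α))))
    have e1 : Real.exp (R * (a₁ * (k:ℝ) + α)) = Real.exp (R * a₁ * k) * Real.exp (R * α) := by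
      rw [← Real.exp_add]; ring_nf
    have e2 : Real.exp ((R * a₁ + 1) * (k:ℝ)) = Real.exp (R * a₁ * k) * Real.exp (k:ℝ) := by
      rw [← Real.exp_add]; ring_nf
    have hk1 : ((k:ℝ)) ≤ Real.exp (k:ℝ) := by
      have := Real.add_one_le_exp (k : ℝ); linarith
    have hk2 : (1:ℝ) ≤ Real.exp (k:ℝ) := Real.one_le_exp (by positivity)
    have key : a₁ * (k:ℝ) + α ≤ (a₁ + α) * Real.exp (k:ℝ) := by nlinarith
    calc u k = (a₁ * k + α) * (α ^ k / cfact c k) * (Real.exp (R * a₁ * k) * Real.exp (R * α)) := by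
          simp only [hudef]; rw [e1]
      _ ≤ ((a₁ + α) * Real.exp (k:ℝ)) * (α ^ k / cfact c k) *
          (Real.exp (R * a₁ * k) * Real.exp (R * α)) := by
          apply mul_le_mul_of_nonneg_right
            (mul_le_mul_of_nonneg_right key (div_nonneg (by positivity) (hcf k).le))
            (by positivity)
      _ = (a₁ + α) * Real.exp (R * α) * (α ^ k * Real.exp ((R * a₁ + 1) * k) / cfact c k) := by
          rw [e2]; ring
  -- summability of c k * g k s
  have hsum_c : ∀ s : ℝ, |s| ≤ R → Summable (fun k => c k * g k s) := by
    intro s hs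
    refine Summable.of_nonneg_of_le (fun k => mul_nonneg (hcnn k) (hgnn k s)) (fun k => ?_) hu
    simp only [hudef]
    have h1 : c k * g k s ≤ c k * (α ^ k / cfact c k * Real.exp (R * (a₁ * k + α))) :=
      mul_le_mul_of_nonneg_left
        (mul_le_mul_of_nonneg_left (hexp s hs k) (div_nonneg (by positivity) (hcf k).le))
        (hcnn k)
    have h2 : c k * (α ^ k / cfact c k * Real.exp (R * (a₁ * k + α))) ≤
        (a₁ * k + α) * (α ^ k / cfact c k) * Real.exp (R * (a₁ * k + α)) := by
      have h3 : c k ≤ a₁ * k + α := by linarith [hcle k]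
      have h4 : 0 ≤ α ^ k / cfact c k * Real.exp (R * (a₁ * k + α)) :=
        mul_nonneg (div_nonneg (by positivity) (hcf k).le) (Real.exp_pos _).le
      calc c k * (α ^ k / cfact c k * Real.exp (R * (a₁ * k + α)))
          ≤ (a₁ * k + α) * (α ^ k / cfact c k * Real.exp (R * (a₁ * k + α))) :=
            mul_le_mul_of_nonneg_right h3 h4
        _ = (a₁ * k + α) * (α ^ k / cfact c k) * Real.exp (R * (a₁ * k + α)) := by ring
    linarith
  -- derivative of each term
  have hderiv_term : ∀ (k : ℕ) (y : ℝ), HasDerivAt (fun s => g k s) ((c k - α) * g k y) y := by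
    intro k y
    have h1 : HasDerivAt (fun s : ℝ => s * (c k - α)) (c k - α) y := by
      simpa using (hasDerivAt_id y).mul_const (c k - α)
    have h2 := (h1.exp).const_mul (α ^ k / cfact c k)
    convert h2 using 1
    show (c k - α) * (α ^ k / cfact c k * Real.exp (y * (c k - α))) = _; ring
    all_goals rfl
  -- bound on the term derivatives on Ioo (-R) R
  have hg' : ∀ (k : ℕ) (y : ℝ), y ∈ Set.Ioo (-R) R → ‖(c k - α) * g k y‖ ≤ u k := by
    intro k y hy
    have hyR : |y| ≤ R := (abs_lt.2 ⟨hy.1, hy.2⟩).le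
    rw [Real.norm_eq_abs, abs_mul, abs_of_nonneg (hgnn k y)]
    have h1 : |c k - α| ≤ a₁ * k + α := by
      calc |c k - α| ≤ |c k| + |α| := abs_sub _ _
        _ = c k + α := by rw [abs_of_nonneg (hcnn k), abs_of_pos hα]
        _ ≤ a₁ * k + α := by linarith [hcle k]
    have h2 : g k y ≤ α ^ k / cfact c k * Real.exp (R * (a₁ * k + α)) :=
      mul_le_mul_of_nonneg_left (hexp y hyR k) (div_nonneg (by positivity) (hcf k).le)
    calc |c k - α| * g k y ≤ (a₁ * k + α) * (α ^ k / cfact c k * Real.exp (R * (a₁ * k + α))) :=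
        mul_le_mul h1 h2 (hgnn k y) (by positivity)
      _ = u k := by simp only [hudef]; ring
  -- derivative of F
  have h0R : (0:ℝ) ∈ Set.Ioo (-R) R := ⟨by linarith, by linarith⟩
  have hsum_g0 : Summable (fun k => g k 0) := hsum_g 0 (by simpa using hR0.le)
  have hF : ∀ y ∈ Set.Ioo (-R) R,
      HasDerivAt (fun s => ∑' k, g k s) (∑' k, (c k - α) * g k y) y := by
    intro y hy
    exact hasDerivAt_tsum_of_isPreconnected hu isOpen_Ioo (convex_Ioo _ _).isPreconnected
      (fun k z _ => hderiv_term k z) hg' h0R hsum_g0 hy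
  -- positivity of F
  have hFpos : ∀ s : ℝ, |s| ≤ R → 0 < ∑' k, g k s := by
    intro s hs
    refine Summable.tsum_pos (hsum_g s hs) (fun k => hgnn k s) 0 ?_
    show 0 < α ^ 0 / cfact c 0 * Real.exp (s * (c 0 - α))
    simp only [pow_zero, cfact]
    positivity
  -- key bound on the derivative of F
  have hFd : ∀ s : ℝ, |s| ≤ T →
      |∑' k, (c k - α) * g k s| ≤ (α * a₁ * T * Real.exp (a₁ * T)) * ∑' k, g k s := by
    intro s hs
    have hsR : |s| ≤ R := le_trans hs hTR
    have hSg := hsum_g s hsR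
    have hSc := hsum_c s hsR
    have hid : ∀ k : ℕ, c (k+1) * g (k+1) s
        = α * (α ^ k / cfact c k * Real.exp (s * (c (k+1) - α))) := by
      intro k
      have hc1 : c (k+1) ≠ 0 := (hcpos _ k.succ_pos).ne'
      have hcfk : cfact c k ≠ 0 := (hcf k).ne'
      simp only [hgdef]
      rw [show cfact c (k+1) = cfact c k * c (k+1) from rfl, pow_succ]
      field_simp
    have hsum_sh : Summable (fun k => α ^ k / cfact c k * Real.exp (s * (c (k+1) - α))) := by
      have h1 : Summable (fun k => c (k+1) * g (k+1) s) := (summable_nat_add_iff 1).2 hSc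
      have h2 : Summable (fun k => α⁻¹ * (c (k+1) * g (k+1) s)) := h1.mul_left _
      refine h2.congr fun k => ?_
      rw [hid k, ← mul_assoc, inv_mul_cancel₀ hα.ne', one_mul]
    have step2 : ∑' k, c k * g k s
        = ∑' k, α * (α ^ k / cfact c k * Real.exp (s * (c (k+1) - α))) := by
      rw [Summable.tsum_eq_zero_add hSc, hc0, zero_mul, zero_add]
      exact tsum_congr hid
    have step3 : ∑' k, (c k - α) * g k s
        = ∑' k, (α * (α ^ k / cfact c k) *
            (Real.exp (s * (c (k+1) - α)) - Real.exp (s * (c k - α)))) := by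
      calc ∑' k, (c k - α) * g k s = ∑' k, (c k * g k s - α * g k s) :=
            tsum_congr fun k => by ring
        _ = (∑' k, c k * g k s) - ∑' k, α * g k s := Summable.tsum_sub hSc (hSg.mul_left α)
        _ = (∑' k, α * (α ^ k / cfact c k * Real.exp (s * (c (k+1) - α))))
            - ∑' k, α * g k s := by rw [step2]
        _ = ∑' k, (α * (α ^ k / cfact c k * Real.exp (s * (c (k+1) - α))) - α * g k s) :=
            (Summable.tsum_sub (hsum_sh.mul_left α) (hSg.mul_left α)).symm
        _ = _ := tsum_congr fun k => by simp only [hgdef]; ring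
    have hbnd : ∀ k : ℕ, |α * (α ^ k / cfact c k) *
        (Real.exp (s * (c (k+1) - α)) - Real.exp (s * (c k - α)))|
        ≤ (α * a₁ * T * Real.exp (a₁ * T)) * g k s := by
      intro k
      have hd : |s * (c (k+1) - c k)| ≤ T * a₁ := by
        rw [abs_mul]
        exact mul_le_mul hs (hLG k) (abs_nonneg _) hT0
      have hdiff : |Real.exp (s * (c (k+1) - α)) - Real.exp (s * (c k - α))|
          ≤ Real.exp (s * (c k - α)) * (a₁ * T * Real.exp (a₁ * T)) := by
        have e1 : s * (c (k+1) - α) = s * (c k - α) + s * (c (k+1) - c k) := by ring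
        rw [e1, Real.exp_add, show Real.exp (s * (c k - α)) * Real.exp (s * (c (k+1) - c k))
            - Real.exp (s * (c k - α))
            = Real.exp (s * (c k - α)) * (Real.exp (s * (c (k+1) - c k)) - 1) by ring,
          abs_mul, abs_of_pos (Real.exp_pos _)]
        apply mul_le_mul_of_nonneg_left _ (Real.exp_pos _).le
        calc |Real.exp (s * (c (k+1) - c k)) - 1|
            ≤ |s * (c (k+1) - c k)| * Real.exp |s * (c (k+1) - c k)| := abs_exp_sub_one_le _
          _ ≤ (T * a₁) * Real.exp (T * a₁) :=
              mul_le_mul hd (Real.exp_le_exp.2 hd) (Real.exp_pos _).le (by positivity)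
          _ = a₁ * T * Real.exp (a₁ * T) := by rw [mul_comm T a₁]
      have hnn : (0:ℝ) ≤ α * (α ^ k / cfact c k) :=
        mul_nonneg hα.le (div_nonneg (by positivity) (hcf k).le)
      rw [abs_mul]
      calc |α * (α ^ k / cfact c k)| *
            |Real.exp (s * (c (k+1) - α)) - Real.exp (s * (c k - α))|
          = α * (α ^ k / cfact c k) *
            |Real.exp (s * (c (k+1) - α)) - Real.exp (s * (c k - α))| := by
            rw [abs_of_nonneg hnn]
        _ ≤ α * (α ^ k / cfact c k) *
            (Real.exp (s * (c k - α)) * (a₁ * T * Real.exp (a₁ * T))) :=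
            mul_le_mul_of_nonneg_left hdiff hnn
        _ = (α * a₁ * T * Real.exp (a₁ * T)) * g k s := by simp only [hgdef]; ring
    have hsumdiff : Summable (fun k => α * (α ^ k / cfact c k) *
        (Real.exp (s * (c (k+1) - α)) - Real.exp (s * (c k - α)))) := by
      have h1 : Summable (fun k => α * (α ^ k / cfact c k * Real.exp (s * (c (k+1) - α)))) :=
        hsum_sh.mul_left α
      have h2 : Summable (fun k => α * g k s) := hSg.mul_left α
      refine (h1.sub h2).congr fun k => ?_
      simp only [hgdef]; ring
    rw [step3]
    have h1 : |∑' k, (α * (α ^ k / cfact c k) *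
        (Real.exp (s * (c (k+1) - α)) - Real.exp (s * (c k - α))))|
        ≤ ∑' k, |α * (α ^ k / cfact c k) *
        (Real.exp (s * (c (k+1) - α)) - Real.exp (s * (c k - α)))| := by
      simpa only [Real.norm_eq_abs] using
        norm_tsum_le_tsum_norm (f := fun k => α * (α ^ k / cfact c k) *
          (Real.exp (s * (c (k+1) - α)) - Real.exp (s * (c k - α))))
          (by simpa only [Real.norm_eq_abs] using hsumdiff.abs)
    have h2 : ∑' k, |α * (α ^ k / cfact c k) *
        (Real.exp (s * (c (k+1) - α)) - Real.exp (s * (c k - α)))|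
        ≤ ∑' k, ((α * a₁ * T * Real.exp (a₁ * T)) * g k s) :=
      Summable.tsum_le_tsum hbnd hsumdiff.abs (hSg.mul_left _)
    rw [tsum_mul_left] at h2
    exact le_trans h1 h2
  -- log of F and mean value theorem
  set K : ℝ := α * a₁ * T * Real.exp (a₁ * T) with hKdef
  have hIccIoo : Set.Icc (-T) T ⊆ Set.Ioo (-R) R := by
    intro x hx
    exact ⟨by have := hx.1; rw [hRdef]; linarith, by have := hx.2; rw [hRdef]; linarith⟩
  set L : ℝ → ℝ := fun s => Real.log (∑' k, g k s) with hLdef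
  have hLd : ∀ s ∈ Set.Icc (-T) T, HasDerivWithinAt L
      ((∑' k, (c k - α) * g k s) / (∑' k, g k s)) (Set.Icc (-T) T) s := by
    intro s hs
    have hsT : |s| ≤ T := abs_le.2 ⟨hs.1, hs.2⟩
    exact ((hF s (hIccIoo hs)).log (hFpos s (le_trans hsT hTR)).ne').hasDerivWithinAt
  have hbound : ∀ s ∈ Set.Icc (-T) T,
      ‖(∑' k, (c k - α) * g k s) / (∑' k, g k s)‖ ≤ K := by
    intro s hs
    have hsT : |s| ≤ T := abs_le.2 ⟨hs.1, hs.2⟩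
    have hp := hFpos s (le_trans hsT hTR)
    rw [Real.norm_eq_abs, abs_div, abs_of_pos hp, div_le_iff₀ hp]
    exact hFd s hsT
  have h0T : (0:ℝ) ∈ Set.Icc (-T) T := ⟨by linarith, hT0⟩
  have htT : t ∈ Set.Icc (-T) T := ⟨neg_abs_le t, le_abs_self t⟩
  have hmvt := Convex.norm_image_sub_le_of_norm_hasDerivWithin_le hLd hbound
    (convex_Icc _ _) h0T htT
  have h5 : |L t - L 0| ≤ K * T := by
    simpa only [Real.norm_eq_abs, sub_zero] using hmvt
  have hFtpos := hFpos t (by rw [← hTdef]; exact hTR)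
  have hF0pos := hFpos 0 (by simpa using hR0.le)
  have hLt : L t ≤ L 0 + K * T := by
    have := (abs_le.1 h5).2
    linarith
  have hFt : (∑' k, g k t) ≤ (∑' k, g k 0) * Real.exp (K * T) := by
    calc (∑' k, g k t) = Real.exp (L t) := (Real.exp_log hFtpos).symm
      _ ≤ Real.exp (L 0 + K * T) := Real.exp_le_exp.2 hLt
      _ = (∑' k, g k 0) * Real.exp (K * T) := by rw [Real.exp_add, Real.exp_log hF0pos]
  have hZ : Zfun c α = ∑' k, g k 0 := by
    unfold Zfun
    exact tsum_congr fun k => by simp only [hgdef]; rw [zero_mul, Real.exp_zero, mul_one]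
  have hZpos : 0 < Zfun c α := by rw [hZ]; exact hF0pos
  have hKt : K * T = α * a₁ * t ^ 2 * Real.exp (a₁ * T) := by
    rw [hKdef, hTdef, ← sq_abs]; ring
  rw [div_le_iff₀ hZpos]
  have hgoal : (∑' k : ℕ, (α ^ k / cfact c k) * Real.exp (t * (c k - α))) = ∑' k, g k t :=
    tsum_congr fun k => rfl
  rw [hgoal, hZ]
  calc (∑' k, g k t) ≤ (∑' k, g k 0) * Real.exp (K * T) := hFt
    _ = Real.exp (α * a₁ * t ^ 2 * Real.exp (a₁ * T)) * ∑' k, g k 0 := by rw [hKt]; ring
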